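/- Given two finite presentations P and Q, the presented monoids ⟦P⟧ and ⟦Q⟧ are isomorphic if and only if P and Q are Tietze equivalent. -/

import Mathlib

/-- A presentation of a monoid: a type of generators and a set of relations
between words (elements of the free monoid) over the generators. -/
structure MonPres : Type 1 where
  gen : Type
  rel : Set (FreeMonoid gen × FreeMonoid gen)

namespace MonPres

/-- The congruence on the free monoid generated by the relations. -/
def con (P : MonPres) : Con (FreeMonoid P.gen) :=
  conGen fun u v => (u, v) ∈ P.rel

/-- The monoid presented by a presentation. -/
abbrev Presented (P : MonPres) : Type := P.con.Quotient

end MonPres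

/-- A morphism of presentations. -/
structure MonPresHom (P Q : MonPres) where
  toFun : P.gen → Q.gen
  map_rel : ∀ p ∈ P.rel,
    (FreeMonoid.map toFun p.1, FreeMonoid.map toFun p.2) ∈ Q.rel

namespace MonPresHom

/-- The monoid homomorphism induced on presented monoids. -/
def induced {P Q : MonPres} (f : MonPresHom P Q) : P.Presented →* Q.Presented :=
  Con.lift P.con ((Con.mk' Q.con).comp (FreeMonoid.map f.toFun)) (by
    refine Con.conGen_le.mpr ?_
    intro x y hxy
    simp only [Con.ker_rel, MonoidHom.comp_apply, Con.coe_mk']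
    exact (Con.eq _).mpr (ConGen.Rel.of _ _ (f.map_rel (x, y) hxy)))

/-- Identity morphism of presentations. -/
def id (P : MonPres) : MonPresHom P P where
  toFun := _root_.id
  map_rel := by intro p hp; simpa using hp

/-- Composition of morphisms of presentations. -/
def comp {P Q R : MonPres} (g : MonPresHom Q R) (f : MonPresHom P Q) :
    MonPresHom P R where
  toFun := g.toFun ∘ f.toFun
  map_rel := by
    intro p hp
    have h := g.map_rel _ (f.map_rel p hp)
    simpa [FreeMonoid.map_comp] using h

end MonPresHom

/-- The standard presentation of a monoid `M`: generators are the elements of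
`M`, and relations are all pairs of words whose products in `M` coincide. -/
def stdPres (M : Type) [Monoid M] : MonPres where
  gen := M
  rel := {p | FreeMonoid.lift (id : M → M) p.1 = FreeMonoid.lift (id : M → M) p.2}
namespace MonPres

/-- (T1) Adding a derivable generator: a fresh generator (`none`) together
with a relation `u → a`. -/
def addGen (P : MonPres) (u : FreeMonoid P.gen) : MonPres where
  gen := Option P.gen
  rel := (fun p : FreeMonoid P.gen × FreeMonoid P.gen =>
      (FreeMonoid.map some p.1, FreeMonoid.map some p.2)) '' P.rel ∪
    {(FreeMonoid.map some u, FreeMonoid.of (none : Option P.gen))}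

/-- (T2) Adding a relation `u → v`. -/
def addRel (P : MonPres) (u v : FreeMonoid P.gen) : MonPres where
  gen := P.gen
  rel := insert (u, v) P.rel

/-- The inclusion of `P` into `P.addGen u`. -/
def addGenIncl (P : MonPres) (u : FreeMonoid P.gen) :
    MonPresHom P (P.addGen u) where
  toFun := some
  map_rel := fun p hp => Or.inl ⟨p, hp, rfl⟩

/-- The inclusion of `P` into `P.addRel u v`. -/
def addRelIncl (P : MonPres) (u v : FreeMonoid P.gen) :
    MonPresHom P (P.addRel u v) where
  toFun := _root_.id
  map_rel := by
    intro p hp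
    have hm : FreeMonoid.map (_root_.id : P.gen → P.gen) = MonoidHom.id _ :=
      FreeMonoid.hom_eq (fun _ => rfl)
    change (FreeMonoid.map (_root_.id : P.gen → P.gen) p.1,
      FreeMonoid.map (_root_.id : P.gen → P.gen) p.2) ∈ insert (u, v) P.rel
    rw [hm, MonoidHom.id_apply, MonoidHom.id_apply]
    exact Set.mem_insert_of_mem _ hp

end MonPres

/-- One elementary Tietze transformation step, together with bijective
renamings of generators (isomorphic presentations are identified). -/
inductive TietzeStep : MonPres → MonPres → Prop
  | addGen (P : MonPres) (u : FreeMonoid P.gen) : TietzeStep P (P.addGen u)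
  | addRel (P : MonPres) (u v : FreeMonoid P.gen) (h : P.con u v) :
      TietzeStep P (P.addRel u v)
  | rename (P Q : MonPres) (e : P.gen ≃ Q.gen)
      (h : Q.rel = (fun p : FreeMonoid P.gen × FreeMonoid P.gen =>
        (FreeMonoid.map e p.1, FreeMonoid.map e p.2)) '' P.rel) :
      TietzeStep P Q

/-- Tietze equivalence: the smallest equivalence relation containing the
elementary Tietze transformations. -/
def TietzeEquiv : MonPres → MonPres → Prop := Relation.EqvGen TietzeStep
open FreeMonoid

namespace MonPres

theorem con_of {P : MonPres} {a b : FreeMonoid P.gen} (h : (a, b) ∈ P.rel) : P.con a b :=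
  ConGen.Rel.of _ _ h

/-- Mapping along a morphism of presentations preserves the congruence. -/
theorem con_map {P Q : MonPres} (f : MonPresHom P Q) {a b : FreeMonoid P.gen}
    (h : P.con a b) : Q.con (FreeMonoid.map f.toFun a) (FreeMonoid.map f.toFun b) := by
  have hle : P.con ≤ Con.comap (FreeMonoid.map f.toFun) (map_mul _) Q.con := by
    refine Con.conGen_le.mpr fun x y hxy => ?_
    exact ConGen.Rel.of _ _ (f.map_rel (x, y) hxy)
  exact hle h

/-- Substitution: two monoid homs agreeing on generators up to a congruence
agree on all words up to the congruence. -/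
theorem con_subst {Y Z : Type} (c : Con (FreeMonoid Z)) (f g : FreeMonoid Y →* FreeMonoid Z)
    (h : ∀ y, c (f (FreeMonoid.of y)) (g (FreeMonoid.of y))) (u : FreeMonoid Y) :
    c (f u) (g u) := by
  refine FreeMonoid.recOn u ?_ ?_
  · simp only [map_one]; exact c.refl 1
  · intro y xs ih
    simp only [map_mul]
    exact c.mul (h y) ih

theorem hom_ext {P : MonPres} {M : Type*} [Monoid M] {f g : P.Presented →* M}
    (h : ∀ x, f (P.con.mk' (FreeMonoid.of x)) = g (P.con.mk' (FreeMonoid.of x))) : f = g := by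
  refine MonoidHom.ext fun q => ?_
  refine Con.induction_on q fun w => ?_
  have : f.comp P.con.mk' = g.comp P.con.mk' := FreeMonoid.hom_eq h
  exact DFunLike.congr_fun this w

/-- Lift a map on generators respecting relations to the presented monoid. -/
def liftHom (P : MonPres) {M : Type*} [Monoid M] (f : P.gen → M)
    (hf : ∀ p ∈ P.rel, FreeMonoid.lift f p.1 = FreeMonoid.lift f p.2) : P.Presented →* M :=
  Con.lift P.con (FreeMonoid.lift f) (by
    refine Con.conGen_le.mpr fun x y hxy => ?_
    exact hf (x, y) hxy)

@[simp] theorem liftHom_mk (P : MonPres) {M : Type*} [Monoid M] (f : P.gen → M)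
    (hf : ∀ p ∈ P.rel, FreeMonoid.lift f p.1 = FreeMonoid.lift f p.2) (w : FreeMonoid P.gen) :
    P.liftHom f hf (w : P.Presented) = FreeMonoid.lift f w := rfl

end MonPres

@[simp] theorem MonPresHom.induced_mk {P Q : MonPres} (f : MonPresHom P Q)
    (w : FreeMonoid P.gen) :
    f.induced (w : P.Presented) = (FreeMonoid.map f.toFun w : Q.Presented) := rfl
namespace MonPres

/-- The congruence of `addRel` equals the original when the relation is derivable. -/
theorem addRel_con (P : MonPres) {u v : FreeMonoid P.gen} (h : P.con u v) :
    (P.addRel u v).con = P.con := by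
  refine le_antisymm ?_ ?_
  · refine Con.conGen_le.mpr fun x y hxy => ?_
    rcases hxy with hxy | hxy
    · replace hxy := Prod.mk.inj hxy
      rw [hxy.1, hxy.2]; exact h
    · exact ConGen.Rel.of _ _ hxy
  · exact Con.conGen_mono fun x y hxy => Or.inr hxy

/-- Iso for the addRel step. -/
def addRelIso (P : MonPres) {u v : FreeMonoid P.gen} (h : P.con u v) :
    P.Presented ≃* (P.addRel u v).Presented :=
  Con.congr (MulEquiv.refl _) (by rw [P.addRel_con h]; rfl)

/-- The retraction from `(P.addGen u).Presented` to `P.Presented`. -/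
def addGenRetr (P : MonPres) (u : FreeMonoid P.gen) :
    (P.addGen u).Presented →* P.Presented :=
  (P.addGen u).liftHom
    (fun o => Option.rec (P.con.mk' u) (fun x => P.con.mk' (FreeMonoid.of x)) o)
    (by
      have key : (FreeMonoid.lift
            (fun o => Option.rec (P.con.mk' u) (fun x => P.con.mk' (FreeMonoid.of x)) o)).comp
            (FreeMonoid.map (some : P.gen → Option P.gen)) = P.con.mk' :=
        FreeMonoid.hom_eq fun x => rfl
      rintro ⟨a, b⟩ (⟨⟨p1, p2⟩, hp, heq⟩ | heq)
      · simp only [Prod.mk.injEq] at heq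
        rw [← (Prod.mk.inj heq).1, ← (Prod.mk.inj heq).2]
        exact (DFunLike.congr_fun key p1).trans
          (((Con.eq _).mpr (ConGen.Rel.of _ _ hp)).trans (DFunLike.congr_fun key p2).symm)
      · replace heq := Prod.mk.inj (Set.mem_singleton_iff.mp heq)
        rw [heq.1, heq.2]
        exact DFunLike.congr_fun key u)

/-- Iso for the addGen step. -/
def addGenIso (P : MonPres) (u : FreeMonoid P.gen) :
    P.Presented ≃* (P.addGen u).Presented :=
  MonoidHom.toMulEquiv (P.addGenIncl u).induced (P.addGenRetr u)
    (hom_ext fun x => rfl)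
    (hom_ext fun o => by
      cases o with
      | some x => rfl
      | none =>
        show (Con.toQuotient (c := (P.addGen u).con) (FreeMonoid.map some u) : (P.addGen u).Presented) = _
        exact (Con.eq _).mpr (ConGen.Rel.of _ _ (Or.inr rfl)))

/-- Iso for the rename step. -/
def renameIso (P Q : MonPres) (e : P.gen ≃ Q.gen)
    (h : Q.rel = (fun p : FreeMonoid P.gen × FreeMonoid P.gen =>
      (FreeMonoid.map e p.1, FreeMonoid.map e p.2)) '' P.rel) :
    P.Presented ≃* Q.Presented := by
  refine MonoidHom.toMulEquiv
    (MonPresHom.induced ⟨e, fun p hp => h ▸ Set.mem_image_of_mem _ hp⟩)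
    (MonPresHom.induced ⟨e.symm, fun p hp => ?_⟩)
    (hom_ext fun x => ?_) (hom_ext fun y => ?_)
  · rw [h] at hp
    obtain ⟨q, hq, heq⟩ := hp
    have h1 : FreeMonoid.map e.symm p.1 = q.1 := by
      rw [← heq]; simp [FreeMonoid.map_map]
    have h2 : FreeMonoid.map e.symm p.2 = q.2 := by
      rw [← heq]; simp [FreeMonoid.map_map]
    rw [h1, h2]; exact hq
  · show ((FreeMonoid.map e.symm) ((FreeMonoid.map e) (FreeMonoid.of x)) : P.Presented) = _
    simp [FreeMonoid.map_of]
  · show ((FreeMonoid.map e) ((FreeMonoid.map e.symm) (FreeMonoid.of y)) : Q.Presented) = _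
    simp [FreeMonoid.map_of]

end MonPres

/-- Each Tietze step yields an isomorphism of presented monoids. -/
theorem TietzeStep.iso {P Q : MonPres} (h : TietzeStep P Q) :
    Nonempty (P.Presented ≃* Q.Presented) := by
  cases h with
  | addGen u => exact ⟨_root_.MonPres.addGenIso _ u⟩
  | addRel u v hc => exact ⟨_root_.MonPres.addRelIso _ hc⟩
  | rename Q e he => exact ⟨_root_.MonPres.renameIso _ _ e he⟩

theorem TietzeEquiv.iso {P Q : MonPres} (h : TietzeEquiv P Q) :
    Nonempty (P.Presented ≃* Q.Presented) := by
  induction h with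
  | rel _ _ h => exact h.iso
  | refl _ => exact ⟨MulEquiv.refl _⟩
  | symm _ _ _ ih => exact ⟨ih.some.symm⟩
  | trans _ _ _ _ _ ih1 ih2 => exact ⟨ih1.some.trans ih2.some⟩
theorem tietze_of_eq {P Q : MonPres} (h : P = Q) : TietzeEquiv P Q := h ▸ Relation.EqvGen.refl P

theorem TietzeEquiv.trans' {P Q R : MonPres} (h1 : TietzeEquiv P Q) (h2 : TietzeEquiv Q R) :
    TietzeEquiv P R := Relation.EqvGen.trans _ _ _ h1 h2

theorem TietzeEquiv.symm' {P Q : MonPres} (h : TietzeEquiv P Q) : TietzeEquiv Q P :=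
  Relation.EqvGen.symm _ _ h

namespace MonPres

/-- Adding a finite set of derivable relations is a Tietze equivalence. -/
theorem tietze_addRels (P : MonPres) (S : Set (FreeMonoid P.gen × FreeMonoid P.gen))
    (hS : S.Finite) (h : ∀ p ∈ S, P.con p.1 p.2) :
    TietzeEquiv P ⟨P.gen, P.rel ∪ S⟩ := by
  refine Set.Finite.induction_on (motive := fun s _ =>
      (∀ p ∈ s, P.con p.1 p.2) → TietzeEquiv P ⟨P.gen, P.rel ∪ s⟩) S hS ?_ ?_ h
  · exact fun _ => tietze_of_eq (by rw [Set.union_empty])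
  · intro a s ha hs ih h
    refine (ih fun p hp => h p (Set.mem_insert_of_mem _ hp)).trans' ?_
    have hstep : TietzeStep ⟨P.gen, P.rel ∪ s⟩ (MonPres.addRel ⟨P.gen, P.rel ∪ s⟩ a.1 a.2) := by
      refine TietzeStep.addRel ⟨P.gen, P.rel ∪ s⟩ a.1 a.2 ?_
      have hle : P.con ≤ (MonPres.con ⟨P.gen, P.rel ∪ s⟩) :=
        Con.conGen_mono fun x y hxy => Or.inl hxy
      exact hle (h a (Set.mem_insert _ _))
    have heq : MonPres.addRel ⟨P.gen, P.rel ∪ s⟩ a.1 a.2 =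
        (⟨P.gen, P.rel ∪ insert a s⟩ : MonPres) := by
      show (⟨P.gen, insert (a.1, a.2) (P.rel ∪ s)⟩ : MonPres) = _
      rw [Set.union_insert]
    exact TietzeEquiv.trans' (Relation.EqvGen.rel _ _ hstep) (tietze_of_eq heq)

/-- Extending a presentation by a family of generators with defining words. -/
def extend (P : MonPres) (Y : Type) (w : Y → FreeMonoid P.gen) : MonPres where
  gen := P.gen ⊕ Y
  rel := (fun p : FreeMonoid P.gen × FreeMonoid P.gen =>
      (FreeMonoid.map Sum.inl p.1, FreeMonoid.map Sum.inl p.2)) '' P.rel ∪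
    Set.range fun y : Y => (FreeMonoid.map Sum.inl (w y), FreeMonoid.of (Sum.inr y))

end MonPres
namespace MonPres

/-- Map a relation pair along a generator map. -/
def pm {A B : Type} (f : A → B) : FreeMonoid A × FreeMonoid A → FreeMonoid B × FreeMonoid B :=
  fun p => (FreeMonoid.map f p.1, FreeMonoid.map f p.2)

theorem pm_comp {A B C : Type} (g : B → C) (f : A → B) (p : FreeMonoid A × FreeMonoid A) :
    pm g (pm f p) = pm (g ∘ f) p := by
  simp [pm, FreeMonoid.map_map]

theorem pm_image_image {A B C : Type} (g : B → C) (f : A → B)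
    (S : Set (FreeMonoid A × FreeMonoid A)) :
    pm g '' (pm f '' S) = pm (g ∘ f) '' S := by
  rw [Set.image_image]
  exact Set.image_congr' (fun p => pm_comp g f p)

theorem pm_congr {A B : Type} {f g : A → B} (h : ∀ a, f a = g a) (p) :
    pm f p = pm g p := by
  have : f = g := funext h
  rw [this]

theorem pm_image_congr {A B : Type} {f g : A → B} (h : ∀ a, f a = g a)
    (S : Set (FreeMonoid A × FreeMonoid A)) : pm f '' S = pm g '' S :=
  Set.image_congr' (fun p => pm_congr h p)

/-- `Option (X ⊕ α) ≃ X ⊕ Option α`. -/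
def optSumEquiv (X α : Type) : Option (X ⊕ α) ≃ X ⊕ Option α where
  toFun o := match o with
    | none => Sum.inr none
    | some (Sum.inl x) => Sum.inl x
    | some (Sum.inr a) => Sum.inr (some a)
  invFun s := match s with
    | Sum.inl x => some (Sum.inl x)
    | Sum.inr none => none
    | Sum.inr (some a) => some (Sum.inr a)
  left_inv o := by rcases o with _ | x | a <;> rfl
  right_inv s := by rcases s with x | _ | a <;> rfl

theorem tietze_extend (P : MonPres) (Y : Type) [Finite Y] (w : Y → FreeMonoid P.gen) :
    TietzeEquiv P (P.extend Y w) := by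
  revert w
  refine Finite.induction_empty_option
    (P := fun Y => ∀ w : Y → FreeMonoid P.gen, TietzeEquiv P (P.extend Y w)) ?_ ?_ ?_ Y
  · -- transport along an equivalence
    intro α β e H w
    refine (H (w ∘ e)).trans' (Relation.EqvGen.rel _ _
      (TietzeStep.rename _ _ (Equiv.sumCongr (Equiv.refl P.gen) e) ?_))
    show pm Sum.inl '' P.rel ∪
        (Set.range fun y : β => (FreeMonoid.map Sum.inl (w y), FreeMonoid.of (Sum.inr y))) =
      pm (⇑(Equiv.sumCongr (Equiv.refl P.gen) e)) ''
        (pm Sum.inl '' P.rel ∪ Set.range fun a : α =>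
          (FreeMonoid.map Sum.inl ((w ∘ e) a), FreeMonoid.of (Sum.inr a)))
    rw [Set.image_union, pm_image_image, ← Set.range_comp]
    have h1 : (⇑(Equiv.sumCongr (Equiv.refl P.gen) e)) ∘ (Sum.inl : P.gen → P.gen ⊕ α) =
        Sum.inl := rfl
    have h2 : (pm (⇑(Equiv.sumCongr (Equiv.refl P.gen) e)) ∘ fun a : α =>
        (FreeMonoid.map Sum.inl ((w ∘ e) a), FreeMonoid.of (Sum.inr a))) =
        (fun y : β => (FreeMonoid.map Sum.inl (w y), FreeMonoid.of (Sum.inr y))) ∘ ⇑e := by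
      funext a
      simp only [Function.comp_apply, pm, FreeMonoid.map_map, FreeMonoid.map_of]
      rfl
    rw [h1, h2, Function.Surjective.range_comp e.surjective]
  · -- empty case
    intro w
    refine Relation.EqvGen.rel _ _
      (TietzeStep.rename _ _ (Equiv.sumEmpty P.gen PEmpty).symm ?_)
    show (P.extend PEmpty w).rel = pm (⇑(Equiv.sumEmpty P.gen PEmpty).symm) '' P.rel
    have h0 : (Set.range fun y : PEmpty =>
        ((FreeMonoid.map Sum.inl (w y) : FreeMonoid (P.gen ⊕ PEmpty)),
          FreeMonoid.of (Sum.inr y : P.gen ⊕ PEmpty))) = ∅ :=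
      Set.range_eq_empty _
    show pm Sum.inl '' P.rel ∪ _ = _
    rw [h0, Set.union_empty]
    exact pm_image_congr (fun a => rfl) P.rel
  · -- option case
    intro α _ H w
    refine ((H (w ∘ some)).trans' (Relation.EqvGen.rel _ _
      (TietzeStep.addGen _ (FreeMonoid.map Sum.inl (w none))))).trans'
      (Relation.EqvGen.rel _ _ (TietzeStep.rename _ _ (optSumEquiv P.gen α) ?_))
    show pm Sum.inl '' P.rel ∪
        (Set.range fun y : Option α => (FreeMonoid.map Sum.inl (w y), FreeMonoid.of (Sum.inr y))) =
      pm (⇑(optSumEquiv P.gen α)) ''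
        (pm some '' (pm Sum.inl '' P.rel ∪
            Set.range fun a : α =>
              (FreeMonoid.map Sum.inl ((w ∘ some) a), FreeMonoid.of (Sum.inr a))) ∪
          {(FreeMonoid.map some (FreeMonoid.map Sum.inl (w none)),
            FreeMonoid.of (none : Option (P.gen ⊕ α)))})
    set q := ⇑(optSumEquiv P.gen α) with hq
    rw [Set.image_union, Set.image_union, pm_image_image, ← Set.range_comp,
      Set.image_union, pm_image_image, ← Set.range_comp, Set.image_singleton,
      Option.range_eq
        (fun y : Option α => (FreeMonoid.map Sum.inl (w y), FreeMonoid.of (Sum.inr y)))]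
    have h1 : pm (q ∘ (some ∘ Sum.inl)) '' P.rel =
        pm (Sum.inl : P.gen → P.gen ⊕ Option α) '' P.rel :=
      pm_image_congr (fun a => rfl) P.rel
    have h2 : (pm q ∘ (pm some ∘ fun a : α =>
        (FreeMonoid.map Sum.inl ((w ∘ some) a), FreeMonoid.of (Sum.inr a)))) =
        ((fun y : Option α => (FreeMonoid.map Sum.inl (w y), FreeMonoid.of (Sum.inr y))) ∘ some) := by
      funext a
      simp only [Function.comp_apply, pm, FreeMonoid.map_map, FreeMonoid.map_of]
      rfl
    have h3 : pm q (FreeMonoid.map some (FreeMonoid.map Sum.inl (w none)),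
        FreeMonoid.of (none : Option (P.gen ⊕ α))) =
        (FreeMonoid.map Sum.inl (w none), FreeMonoid.of (Sum.inr (none : Option α))) := by
      simp only [pm, FreeMonoid.map_map, FreeMonoid.map_of]
      rfl
    rw [h1, h2, h3]
    ext p
    simp only [Set.mem_union, Set.mem_insert_iff, Set.mem_singleton_iff, Set.mem_range]
    tauto

end MonPres
namespace MonPres

/-- The "big" presentation combining generators and relations of both `P` and `Q`,
along with defining relations for each generator in terms of the other side. -/
def big (P Q : MonPres) (w : Q.gen → FreeMonoid P.gen) (v : P.gen → FreeMonoid Q.gen) :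
    MonPres where
  gen := P.gen ⊕ Q.gen
  rel := (P.extend Q.gen w).rel ∪
    (pm Sum.inr '' Q.rel ∪
      Set.range fun x : P.gen => (FreeMonoid.map Sum.inr (v x), FreeMonoid.of (Sum.inl x)))

theorem tietze_big (P Q : MonPres) [Finite P.gen] [Finite Q.gen] (hQ₂ : Q.rel.Finite)
    (e : P.Presented ≃* Q.Presented)
    (w : Q.gen → FreeMonoid P.gen) (v : P.gen → FreeMonoid Q.gen)
    (hw : ∀ y, P.con.mk' (w y) = e.symm (Q.con.mk' (FreeMonoid.of y)))
    (hv : ∀ x, Q.con.mk' (v x) = e (P.con.mk' (FreeMonoid.of x))) :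
    TietzeEquiv P (P.big Q w v) := by
  classical
  set E := P.extend Q.gen w with hE
  refine (P.tietze_extend Q.gen w).trans' ?_
  have hbig : P.big Q w v = ⟨E.gen, E.rel ∪
      (pm Sum.inr '' Q.rel ∪
        Set.range fun x : P.gen =>
          (FreeMonoid.map Sum.inr (v x), FreeMonoid.of (Sum.inl x)))⟩ := rfl
  rw [hbig]
  refine tietze_addRels E _ ((hQ₂.image _).union (Set.finite_range _)) ?_
  -- derivability of the added relations
  have hincl : ∀ {a b : FreeMonoid P.gen}, P.con a b →
      E.con (FreeMonoid.map Sum.inl a) (FreeMonoid.map Sum.inl b) :=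
    fun h => con_map (P := P) (Q := E) ⟨Sum.inl, fun p hp => Or.inl ⟨p, hp, rfl⟩⟩ h
  set liftW : FreeMonoid Q.gen →* FreeMonoid P.gen := FreeMonoid.lift w with hliftW
  have subst : ∀ u : FreeMonoid Q.gen,
      E.con (FreeMonoid.map Sum.inr u) (FreeMonoid.map Sum.inl (liftW u)) := by
    intro u
    refine con_subst E.con (FreeMonoid.map Sum.inr)
      ((FreeMonoid.map Sum.inl).comp liftW) (fun y => ?_) u
    exact E.con.symm (ConGen.Rel.of _ _ (Or.inr ⟨y, rfl⟩))
  have hθ : (P.con.mk'.comp liftW : FreeMonoid Q.gen →* P.Presented) =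
      ((e.symm : Q.Presented ≃* P.Presented) : Q.Presented →* P.Presented).comp Q.con.mk' :=
    FreeMonoid.hom_eq fun y => hw y
  have hW : ∀ u₁ u₂ : FreeMonoid Q.gen, Q.con u₁ u₂ → P.con (liftW u₁) (liftW u₂) := by
    intro u₁ u₂ h
    have h1 : Q.con.mk' u₁ = Q.con.mk' u₂ := (Con.eq _).mpr h
    have hmid : e.symm (Q.con.mk' u₁) = e.symm (Q.con.mk' u₂) := congrArg _ h1
    exact (Con.eq _).mp
      ((DFunLike.congr_fun hθ u₁).trans (hmid.trans (DFunLike.congr_fun hθ u₂).symm))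
  rintro ⟨a, b⟩ (⟨⟨s1, s2⟩, hs, heq⟩ | ⟨x, heq⟩)
  · simp only [pm, Prod.mk.injEq] at heq
    rw [← heq.1, ← heq.2]
    refine (subst s1).trans (E.con.trans ?_ (E.con.symm (subst s2)))
    exact hincl (hW s1 s2 (ConGen.Rel.of _ _ hs))
  · simp only [Prod.mk.injEq] at heq
    rw [← (Prod.mk.inj heq).1, ← (Prod.mk.inj heq).2]
    refine (subst (v x)).trans ?_
    have hx : P.con (liftW (v x)) (FreeMonoid.of x) := by
      refine (Con.eq _).mp ?_
      show P.con.mk'.comp liftW (v x) = _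
      rw [hθ]
      show e.symm (Q.con.mk' (v x)) = _
      rw [hv x]
      exact e.symm_apply_apply _
    exact hincl hx

end MonPres
namespace MonPres

theorem big_swap (P Q : MonPres) (w : Q.gen → FreeMonoid P.gen) (v : P.gen → FreeMonoid Q.gen) :
    TietzeStep (Q.big P v w) (P.big Q w v) := by
  refine TietzeStep.rename _ _ (Equiv.sumComm Q.gen P.gen) ?_
  show (pm Sum.inl '' P.rel ∪
      Set.range fun y : Q.gen => (FreeMonoid.map Sum.inl (w y), FreeMonoid.of (Sum.inr y))) ∪
      (pm Sum.inr '' Q.rel ∪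
        Set.range fun x : P.gen => (FreeMonoid.map Sum.inr (v x), FreeMonoid.of (Sum.inl x))) =
    pm (⇑(Equiv.sumComm Q.gen P.gen)) ''
      ((pm Sum.inl '' Q.rel ∪
        Set.range fun x : P.gen => (FreeMonoid.map Sum.inl (v x), FreeMonoid.of (Sum.inr x))) ∪
        (pm Sum.inr '' P.rel ∪
          Set.range fun y : Q.gen => (FreeMonoid.map Sum.inr (w y), FreeMonoid.of (Sum.inl y))))
  set sc := ⇑(Equiv.sumComm Q.gen P.gen) with hsc
  rw [Set.image_union, Set.image_union, Set.image_union, pm_image_image, pm_image_image,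
    ← Set.range_comp, ← Set.range_comp]
  have h1 : pm (sc ∘ Sum.inl) '' Q.rel = pm (Sum.inr : Q.gen → P.gen ⊕ Q.gen) '' Q.rel :=
    pm_image_congr (fun a => rfl) Q.rel
  have h2 : pm (sc ∘ Sum.inr) '' P.rel = pm (Sum.inl : P.gen → P.gen ⊕ Q.gen) '' P.rel :=
    pm_image_congr (fun a => rfl) P.rel
  have h3 : (pm sc ∘ fun x : P.gen =>
      (FreeMonoid.map Sum.inl (v x), FreeMonoid.of (Sum.inr x))) =
      fun x : P.gen => (FreeMonoid.map Sum.inr (v x), FreeMonoid.of (Sum.inl x)) := by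
    funext a
    simp only [Function.comp_apply, pm, FreeMonoid.map_map, FreeMonoid.map_of]
    rfl
  have h4 : (pm sc ∘ fun y : Q.gen =>
      (FreeMonoid.map Sum.inr (w y), FreeMonoid.of (Sum.inl y))) =
      fun y : Q.gen => (FreeMonoid.map Sum.inl (w y), FreeMonoid.of (Sum.inr y)) := by
    funext a
    simp only [Function.comp_apply, pm, FreeMonoid.map_map, FreeMonoid.map_of]
    rfl
  rw [h1, h2, h3, h4]
  ext p
  simp only [Set.mem_union]
  tauto

end MonPres

theorem stmt4 (P Q : MonPres)
    (hP₁ : Finite P.gen) (hP₂ : P.rel.Finite)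
    (hQ₁ : Finite Q.gen) (hQ₂ : Q.rel.Finite) :
    Nonempty (P.Presented ≃* Q.Presented) ↔ TietzeEquiv P Q := by
  constructor
  · rintro ⟨e⟩
    choose w hw using fun y : Q.gen =>
      Con.mk'_surjective (c := P.con) (e.symm (Q.con.mk' (FreeMonoid.of y)))
    choose v hv using fun x : P.gen =>
      Con.mk'_surjective (c := Q.con) (e (P.con.mk' (FreeMonoid.of x)))
    have h1 : TietzeEquiv P (P.big Q w v) := P.tietze_big Q hQ₂ e w v hw hv
    have h2 : TietzeEquiv Q (Q.big P v w) := by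
      refine Q.tietze_big P hP₂ e.symm v w (fun x => ?_) (fun y => ?_)
      · rw [hv x, MulEquiv.symm_symm]
      · rw [hw y]
    exact h1.trans' ((h2.trans' (Relation.EqvGen.rel _ _ (P.big_swap Q w v))).symm')
  · exact fun h => h.iso
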